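/- Let p_0, p_1 be continuous probability density functions on R that are bounded above by K, and let B = ∪_{i=1}^M (c_i, d_i) and A = ∪_{i=1}^M (a_i, b_i) be finite disjoint unions of intervals with |a_i − c_i| ≤ ε and |b_i − d_i| ≤ ε for all i. Then R(A) − R(B) ≤ 2εMK, where R(E) = ∫_{E^C} p_1 dx + ∫_E p_0 dx. -/

import Mathlib

open MeasureTheory

lemma risk_diff_le_mem_aux {a b c e x : ℝ} (h1 : x ∈ Set.Ioo a b) (h2 : x ∉ Set.Ioo c e) :
    x ∈ Set.Icc (min a c) (max a c) ∪ Set.Icc (min b e) (max b e) := by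
  obtain ⟨ha, hb⟩ := h1
  rw [Set.mem_Ioo, not_and_or, not_lt, not_lt] at h2
  rcases h2 with h | h
  · exact Or.inl ⟨le_trans (min_le_left _ _) ha.le, le_trans h (le_max_right _ _)⟩
  · exact Or.inr ⟨le_trans (min_le_right _ _) h, le_trans hb.le (le_max_left _ _)⟩

theorem risk_diff_le (p₀ p₁ : ℝ → ℝ) (K ε : ℝ) (hε : 0 ≤ ε)
    (hc₀ : Continuous p₀) (hc₁ : Continuous p₁)
    (h₀nn : ∀ x, 0 ≤ p₀ x) (h₁nn : ∀ x, 0 ≤ p₁ x)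
    (h₀K : ∀ x, p₀ x ≤ K) (h₁K : ∀ x, p₁ x ≤ K)
    (hint₀ : Integrable p₀) (hint₁ : Integrable p₁)
    (hprob₀ : ∫ x, p₀ x = 1) (hprob₁ : ∫ x, p₁ x = 1)
    (M : ℕ) (a b c e : Fin M → ℝ)
    (hAdisj : Pairwise (Function.onFun Disjoint fun i => Set.Ioo (a i) (b i)))
    (hBdisj : Pairwise (Function.onFun Disjoint fun i => Set.Ioo (c i) (e i)))
    (hac : ∀ i, |a i - c i| ≤ ε) (hbd : ∀ i, |b i - e i| ≤ ε) :
    ((∫ x in (⋃ i, Set.Ioo (a i) (b i))ᶜ, p₁ x) +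
        ∫ x in ⋃ i, Set.Ioo (a i) (b i), p₀ x) -
      ((∫ x in (⋃ i, Set.Ioo (c i) (e i))ᶜ, p₁ x) +
        ∫ x in ⋃ i, Set.Ioo (c i) (e i), p₀ x) ≤
      2 * ε * M * K := by
  classical
  set A := ⋃ i, Set.Ioo (a i) (b i) with hAdef
  set B := ⋃ i, Set.Ioo (c i) (e i) with hBdef
  have hA : MeasurableSet A := MeasurableSet.iUnion fun i => measurableSet_Ioo
  have hB : MeasurableSet B := MeasurableSet.iUnion fun i => measurableSet_Ioo
  have hK : 0 ≤ K := le_trans (h₀nn 0) (h₀K 0)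
  -- rewrite complement integrals
  have hcomplA : ∫ x in Aᶜ, p₁ x = 1 - ∫ x in A, p₁ x := by
    have h := integral_add_compl hA hint₁
    rw [hprob₁] at h; linarith
  have hcomplB : ∫ x in Bᶜ, p₁ x = 1 - ∫ x in B, p₁ x := by
    have h := integral_add_compl hB hint₁
    rw [hprob₁] at h; linarith
  -- split integrals over A and B
  have hsplitA0 : (∫ x in A ∩ B, p₀ x) + ∫ x in A \ B, p₀ x = ∫ x in A, p₀ x :=
    integral_inter_add_diff hB hint₀.integrableOn
  have hsplitB0 : (∫ x in A ∩ B, p₀ x) + ∫ x in B \ A, p₀ x = ∫ x in B, p₀ x := by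
    rw [Set.inter_comm]; exact integral_inter_add_diff hA hint₀.integrableOn
  have hsplitA1 : (∫ x in A ∩ B, p₁ x) + ∫ x in A \ B, p₁ x = ∫ x in A, p₁ x :=
    integral_inter_add_diff hB hint₁.integrableOn
  have hsplitB1 : (∫ x in A ∩ B, p₁ x) + ∫ x in B \ A, p₁ x = ∫ x in B, p₁ x := by
    rw [Set.inter_comm]; exact integral_inter_add_diff hA hint₁.integrableOn
  have hd0 : 0 ≤ ∫ x in B \ A, p₀ x :=
    setIntegral_nonneg (hB.diff hA) fun x _ => h₀nn x
  have hd1 : 0 ≤ ∫ x in A \ B, p₁ x :=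
    setIntegral_nonneg (hA.diff hB) fun x _ => h₁nn x
  -- the covering set S
  set S : Set ℝ := ⋃ i, (Set.Icc (min (a i) (c i)) (max (a i) (c i)) ∪
      Set.Icc (min (b i) (e i)) (max (b i) (e i))) with hSdef
  have hsub : (A \ B) ∪ (B \ A) ⊆ S := by
    intro x hx
    rcases hx with ⟨hxA, hxB⟩ | ⟨hxB, hxA⟩
    · obtain ⟨i, hi⟩ := Set.mem_iUnion.mp hxA
      have hni : x ∉ Set.Ioo (c i) (e i) := fun h => hxB (Set.mem_iUnion.mpr ⟨i, h⟩)
      exact Set.mem_iUnion.mpr ⟨i, risk_diff_le_mem_aux hi hni⟩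
    · obtain ⟨i, hi⟩ := Set.mem_iUnion.mp hxB
      have hni : x ∉ Set.Ioo (a i) (b i) := fun h => hxA (Set.mem_iUnion.mpr ⟨i, h⟩)
      have := risk_diff_le_mem_aux hi hni
      refine Set.mem_iUnion.mpr ⟨i, ?_⟩
      simpa [min_comm, max_comm] using this
  have hdisj : Disjoint (A \ B) (B \ A) := disjoint_sdiff_sdiff
  -- measure bound on S
  have hμS : volume S ≤ ENNReal.ofReal (2 * ε * M) := by
    calc volume S ≤ ∑ i, volume (Set.Icc (min (a i) (c i)) (max (a i) (c i)) ∪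
          Set.Icc (min (b i) (e i)) (max (b i) (e i))) := measure_iUnion_fintype_le _ _
      _ ≤ ∑ _i : Fin M, ENNReal.ofReal (2 * ε) := by
          refine Finset.sum_le_sum fun i _ => ?_
          calc volume (Set.Icc (min (a i) (c i)) (max (a i) (c i)) ∪
                Set.Icc (min (b i) (e i)) (max (b i) (e i)))
              ≤ volume (Set.Icc (min (a i) (c i)) (max (a i) (c i))) +
                volume (Set.Icc (min (b i) (e i)) (max (b i) (e i))) :=
                measure_union_le _ _
            _ = ENNReal.ofReal (max (a i) (c i) - min (a i) (c i)) +
                ENNReal.ofReal (max (b i) (e i) - min (b i) (e i)) := by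
                rw [Real.volume_Icc, Real.volume_Icc]
            _ ≤ ENNReal.ofReal ε + ENNReal.ofReal ε := by
                refine add_le_add (ENNReal.ofReal_le_ofReal ?_)
                  (ENNReal.ofReal_le_ofReal ?_)
                · rw [max_sub_min_eq_abs]
                  first | exact hac i | (rw [abs_sub_comm]; exact hac i)
                · rw [max_sub_min_eq_abs]
                  first | exact hbd i | (rw [abs_sub_comm]; exact hbd i)
            _ = ENNReal.ofReal (2 * ε) := by
                rw [← ENNReal.ofReal_add hε hε]; ring_nf
      _ = ENNReal.ofReal (2 * ε * M) := by
          rw [Finset.sum_const, Finset.card_univ, Fintype.card_fin, nsmul_eq_mul,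
            ← ENNReal.ofReal_natCast M, ← ENNReal.ofReal_mul (Nat.cast_nonneg M)]
          congr 1
          ring
  -- finiteness of the pieces
  have hfinAB : volume (A \ B) < ⊤ :=
    lt_of_le_of_lt (le_trans (measure_mono (le_trans Set.subset_union_left hsub)) hμS)
      ENNReal.ofReal_lt_top
  have hfinBA : volume (B \ A) < ⊤ :=
    lt_of_le_of_lt (le_trans (measure_mono (le_trans Set.subset_union_right hsub)) hμS)
      ENNReal.ofReal_lt_top
  -- pointwise bounds integrated
  have h0le : ∫ x in A \ B, p₀ x ≤ (volume (A \ B)).toReal * K := by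
    calc ∫ x in A \ B, p₀ x ≤ ∫ _x in A \ B, K :=
          setIntegral_mono_on hint₀.integrableOn
            ((integrableOn_const_iff).mpr (Or.inr hfinAB)) (hA.diff hB) (fun x _ => h₀K x)
      _ = (volume (A \ B)).toReal * K := by rw [setIntegral_const, smul_eq_mul]; rfl
  have h1le : ∫ x in B \ A, p₁ x ≤ (volume (B \ A)).toReal * K := by
    calc ∫ x in B \ A, p₁ x ≤ ∫ _x in B \ A, K :=
          setIntegral_mono_on hint₁.integrableOn
            ((integrableOn_const_iff).mpr (Or.inr hfinBA)) (hB.diff hA) (fun x _ => h₁K x)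
      _ = (volume (B \ A)).toReal * K := by rw [setIntegral_const, smul_eq_mul]; rfl
  -- total measure bound
  have hmeas : (volume (A \ B)).toReal + (volume (B \ A)).toReal ≤ 2 * ε * M := by
    rw [← ENNReal.toReal_add hfinAB.ne hfinBA.ne]
    refine ENNReal.toReal_le_of_le_ofReal (by positivity) ?_
    rw [← measure_union hdisj (hB.diff hA)]
    exact le_trans (measure_mono hsub) hμS
  have hmeasK : ((volume (A \ B)).toReal + (volume (B \ A)).toReal) * K ≤ 2 * ε * M * K :=
    mul_le_mul_of_nonneg_right hmeas hK
  rw [hcomplA, hcomplB]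
  nlinarith [h0le, h1le, hmeasK, hd0, hd1, hsplitA0, hsplitB0, hsplitA1, hsplitB1]
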